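/- Let G be a locally compact second countable group with a left Reiter sequence (F_m), and let g ↦ u_g be a bounded measurable function to a Hilbert space. Then there exists a two-sided Reiter sequence (F'_n) (namely F'_n = F_n * F_n^*) such that limsup_m ‖∫ u_g dF_m(g)‖² ≤ inf_n limsup_m ∫∫ ⟨u_g, u_{hg}⟩ dF'_n(h) dF_m(g). -/

import Mathlib

open MeasureTheory Filter Topology
open scoped RealInnerProductSpace

/-- Total variation distance between two (finite) measures. -/
noncomputable def tvDist {G : Type*} [MeasurableSpace G] (μ ν : Measure G) : ENNReal :=
  ⨆ (s : Set G) (_ : MeasurableSet s), (μ s - ν s) + (ν sᶜ - μ sᶜ)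

/-- Left Reiter sequence. -/
def IsLeftReiter {G : Type*} [Group G] [MeasurableSpace G] (F : ℕ → Measure G) : Prop :=
  (∀ N, IsProbabilityMeasure (F N)) ∧
    ∀ h : Measure G, IsProbabilityMeasure h →
      Tendsto (fun N => tvDist ((h.mconv (F N))) (F N)) atTop (𝓝 0)

/-- Right Reiter sequence. -/
def IsRightReiter {G : Type*} [Group G] [MeasurableSpace G] (F : ℕ → Measure G) : Prop :=
  (∀ N, IsProbabilityMeasure (F N)) ∧
    ∀ h : Measure G, IsProbabilityMeasure h →
      Tendsto (fun N => tvDist (((F N).mconv h)) (F N)) atTop (𝓝 0)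

/-- The adjoint measure `μ^*`, the pushforward of `μ` under inversion. -/
noncomputable def adjointMeasure {G : Type*} [Group G] [MeasurableSpace G] (μ : Measure G) :
    Measure G := Measure.map (fun g : G => g⁻¹) μ

lemma le_tvDist {G : Type*} [MeasurableSpace G] (μ ν : Measure G) {s : Set G}
    (hs : MeasurableSet s) : (μ s - ν s) + (ν sᶜ - μ sᶜ) ≤ tvDist μ ν :=
  le_iSup₂ (f := fun s (_ : MeasurableSet s) => (μ s - ν s) + (ν sᶜ - μ sᶜ)) s hs

lemma tvDist_le_two {G : Type*} [MeasurableSpace G] (μ ν : Measure G)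
    [IsProbabilityMeasure μ] [IsProbabilityMeasure ν] : tvDist μ ν ≤ 2 := by
  refine iSup₂_le fun s hs => ?_
  calc (μ s - ν s) + (ν sᶜ - μ sᶜ) ≤ 1 + 1 :=
        add_le_add (le_trans tsub_le_self prob_le_one) (le_trans tsub_le_self prob_le_one)
  _ = 2 := one_add_one_eq_two

lemma tvDist_ne_top {G : Type*} [MeasurableSpace G] (μ ν : Measure G)
    [IsProbabilityMeasure μ] [IsProbabilityMeasure ν] : tvDist μ ν ≠ ⊤ :=
  fun h => by simpa [h] using tvDist_le_two μ ν

lemma tvDist_map_le {G G' : Type*} [MeasurableSpace G] [MeasurableSpace G']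
    (μ ν : Measure G) {f : G → G'} (hf : Measurable f) :
    tvDist (μ.map f) (ν.map f) ≤ tvDist μ ν := by
  refine iSup₂_le fun s hs => ?_
  rw [Measure.map_apply hf hs, Measure.map_apply hf hs, Measure.map_apply hf hs.compl,
    Measure.map_apply hf hs.compl, Set.preimage_compl]
  exact le_tvDist μ ν (hf hs)

lemma integrable_of_bdd {α E : Type*} [MeasurableSpace α] [NormedAddCommGroup E]
    {μ : Measure α} [IsFiniteMeasure μ] {f : α → E} (hf : AEStronglyMeasurable f μ)
    {C : ℝ} (h : ∀ x, ‖f x‖ ≤ C) : Integrable f μ :=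
  ⟨hf, HasFiniteIntegral.of_bounded (C := C) (ae_of_all _ h)⟩

/-- key: difference of integrals bounded by tvDist -/
lemma norm_integral_sub_le_tvDist {α E : Type*} [MeasurableSpace α] [NormedAddCommGroup E]
    [NormedSpace ℝ E] (μ ν : Measure α) [IsProbabilityMeasure μ] [IsProbabilityMeasure ν]
    {f : α → E} (hf : StronglyMeasurable f) {C : ℝ} (hC0 : 0 ≤ C) (hC : ∀ x, ‖f x‖ ≤ C) :
    ‖(∫ x, f x ∂μ) - ∫ x, f x ∂ν‖ ≤ C * (tvDist μ ν).toReal := by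
  obtain ⟨s, hs, h1, h2⟩ := hahn_decomposition (μ := μ) (ν := ν)
  have hrs : ν.restrict s ≤ μ.restrict s := by
    refine Measure.le_iff.2 fun t ht => ?_
    rw [Measure.restrict_apply ht, Measure.restrict_apply ht]
    exact h1 _ (ht.inter hs) Set.inter_subset_right
  have hrc : μ.restrict sᶜ ≤ ν.restrict sᶜ := by
    refine Measure.le_iff.2 fun t ht => ?_
    rw [Measure.restrict_apply ht, Measure.restrict_apply ht]
    exact h2 _ (ht.inter hs.compl) Set.inter_subset_right
  have hint : ∀ (κ : Measure α) [IsFiniteMeasure κ], Integrable f κ := fun κ _ =>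
    integrable_of_bdd hf.aestronglyMeasurable hC
  have key : ∀ (κ₁ κ₂ : Measure α) [IsFiniteMeasure κ₁] [IsFiniteMeasure κ₂], κ₂ ≤ κ₁ →
      (∫ x, f x ∂κ₁) - ∫ x, f x ∂κ₂ = ∫ x, f x ∂(κ₁ - κ₂) := by
    intro κ₁ κ₂ i1 i2 hle
    have hf1 : IsFiniteMeasure (κ₁ - κ₂) := isFiniteMeasure_of_le κ₁ Measure.sub_le
    have : ∫ x, f x ∂κ₁ = (∫ x, f x ∂(κ₁ - κ₂)) + ∫ x, f x ∂κ₂ := by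
      conv_lhs => rw [← Measure.sub_add_cancel_of_le hle]
      exact integral_add_measure (hint _) (hint _)
    rw [this]; abel
  have hsplit : ∀ κ : Measure α, [IsFiniteMeasure κ] →
      ∫ x, f x ∂κ = (∫ x, f x ∂(κ.restrict s)) + ∫ x, f x ∂(κ.restrict sᶜ) := by
    intro κ _
    conv_lhs => rw [← Measure.restrict_add_restrict_compl (μ := κ) hs]
    exact integral_add_measure (hint _) (hint _)
  have hρ1 : IsFiniteMeasure (μ.restrict s - ν.restrict s) :=
    isFiniteMeasure_of_le _ Measure.sub_le
  have hρ2 : IsFiniteMeasure (ν.restrict sᶜ - μ.restrict sᶜ) :=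
    isFiniteMeasure_of_le _ Measure.sub_le
  have hdiff : (∫ x, f x ∂μ) - ∫ x, f x ∂ν
      = (∫ x, f x ∂(μ.restrict s - ν.restrict s))
        - ∫ x, f x ∂(ν.restrict sᶜ - μ.restrict sᶜ) := by
    rw [hsplit μ, hsplit ν, ← key _ _ hrs, ← key _ _ hrc]; abel
  have hb1 : ‖∫ x, f x ∂(μ.restrict s - ν.restrict s)‖
      ≤ C * ((μ.restrict s - ν.restrict s) Set.univ).toReal :=
    norm_integral_le_of_norm_le_const (ae_of_all _ hC)
  have hb2 : ‖∫ x, f x ∂(ν.restrict sᶜ - μ.restrict sᶜ)‖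
      ≤ C * ((ν.restrict sᶜ - μ.restrict sᶜ) Set.univ).toReal :=
    norm_integral_le_of_norm_le_const (ae_of_all _ hC)
  have e1 : (μ.restrict s - ν.restrict s) Set.univ = μ s - ν s := by
    rw [Measure.sub_apply MeasurableSet.univ hrs, Measure.restrict_apply_univ,
      Measure.restrict_apply_univ]
  have e2 : (ν.restrict sᶜ - μ.restrict sᶜ) Set.univ = ν sᶜ - μ sᶜ := by
    rw [Measure.sub_apply MeasurableSet.univ hrc, Measure.restrict_apply_univ,
      Measure.restrict_apply_univ]
  have hsum : (μ s - ν s).toReal + (ν sᶜ - μ sᶜ).toReal ≤ (tvDist μ ν).toReal := by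
    rw [← ENNReal.toReal_add (by finiteness) (by finiteness)]
    exact ENNReal.toReal_mono (tvDist_ne_top μ ν) (le_tvDist μ ν hs)
  calc ‖(∫ x, f x ∂μ) - ∫ x, f x ∂ν‖
      ≤ ‖∫ x, f x ∂(μ.restrict s - ν.restrict s)‖
        + ‖∫ x, f x ∂(ν.restrict sᶜ - μ.restrict sᶜ)‖ := by rw [hdiff]; exact norm_sub_le _ _
    _ ≤ C * ((μ s - ν s).toReal + (ν sᶜ - μ sᶜ).toReal) := by
        rw [mul_add]; rw [e1] at hb1; rw [e2] at hb2; exact add_le_add hb1 hb2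
    _ ≤ C * (tvDist μ ν).toReal := by
        exact mul_le_mul_of_nonneg_left hsum hC0


section Grp
variable {G : Type*} [Group G] [MeasurableSpace G] [MeasurableMul₂ G] [MeasurableInv G]

lemma measurable_mul2 : Measurable (fun p : G × G => p.1 * p.2) := measurable_mul

lemma mconv_assoc (μ ν ρ : Measure G) [SFinite μ] [SFinite ν] [SFinite ρ] :
    (μ.mconv ν).mconv ρ = μ.mconv (ν.mconv ρ) := by
  have L : (μ.mconv ν).mconv ρ
      = Measure.map (fun p : (G × G) × G => p.1.1 * p.1.2 * p.2) ((μ.prod ν).prod ρ) := by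
    unfold Measure.mconv
    have : (Measure.map (fun x : G × G => x.1 * x.2) (μ.prod ν)).prod ρ
        = Measure.map (Prod.map (fun x : G × G => x.1 * x.2) id) ((μ.prod ν).prod ρ) := by
      rw [← Measure.map_prod_map _ _ measurable_mul measurable_id, Measure.map_id]
    rw [this, Measure.map_map measurable_mul (measurable_mul.prodMap measurable_id)]
    rfl
  have R : μ.mconv (ν.mconv ρ)
      = Measure.map (fun p : (G × G) × G => p.1.1 * (p.1.2 * p.2)) ((μ.prod ν).prod ρ) := by
    unfold Measure.mconv
    have : μ.prod (Measure.map (fun x : G × G => x.1 * x.2) (ν.prod ρ))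
        = Measure.map (Prod.map id (fun x : G × G => x.1 * x.2)) (μ.prod (ν.prod ρ)) := by
      rw [← Measure.map_prod_map _ _ measurable_id measurable_mul, Measure.map_id]
    rw [this, Measure.map_map measurable_mul (measurable_id.prodMap measurable_mul),
      ← Measure.prodAssoc_prod (μ := μ) (ν := ν) (τ := ρ),
      Measure.map_map (measurable_mul.comp (measurable_id.prodMap measurable_mul))
        MeasurableEquiv.prodAssoc.measurable]
    rfl
  rw [L, R]
  congr 1
  ext p
  exact mul_assoc _ _ _

instance adjoint_prob (μ : Measure G) [IsProbabilityMeasure μ] :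
    IsProbabilityMeasure (adjointMeasure μ) :=
  Measure.isProbabilityMeasure_map measurable_inv.aemeasurable

instance adjoint_sfinite (μ : Measure G) [SFinite μ] : SFinite (adjointMeasure μ) := by
  unfold adjointMeasure; infer_instance

lemma adjoint_adjoint (μ : Measure G) : adjointMeasure (adjointMeasure μ) = μ := by
  unfold adjointMeasure
  rw [Measure.map_map measurable_inv measurable_inv]
  simp

lemma adjoint_mconv (μ ν : Measure G) [SFinite μ] [SFinite ν] :
    adjointMeasure (μ.mconv ν) = (adjointMeasure ν).mconv (adjointMeasure μ) := by
  have L : adjointMeasure (μ.mconv ν)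
      = Measure.map (fun p : G × G => (p.1 * p.2)⁻¹) (μ.prod ν) := by
    unfold adjointMeasure Measure.mconv
    rw [Measure.map_map measurable_inv measurable_mul]
    rfl
  have R : (adjointMeasure ν).mconv (adjointMeasure μ)
      = Measure.map (fun p : G × G => p.2⁻¹ * p.1⁻¹) (μ.prod ν) := by
    unfold adjointMeasure Measure.mconv
    rw [Measure.map_prod_map _ _ measurable_inv measurable_inv,
      Measure.map_map measurable_mul (measurable_inv.prodMap measurable_inv),
      ← Measure.prod_swap,
      Measure.map_map (measurable_mul.comp (measurable_inv.prodMap measurable_inv))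
        measurable_swap]
    rfl
  rw [L, R]
  congr 1
  ext p
  exact mul_inv_rev _ _

lemma dirac_mconv (l : G) (μ : Measure G) [SFinite μ] :
    (Measure.dirac l).mconv μ = μ.map (fun x => l * x) := by
  unfold Measure.mconv
  rw [Measure.dirac_prod, Measure.map_map measurable_mul measurable_prodMk_left]
  rfl

lemma mconv_apply (μ ν : Measure G) [SFinite μ] [SFinite ν] {s : Set G}
    (hs : MeasurableSet s) :
    (μ.mconv ν) s = ∫⁻ y, μ ((fun x => x * y) ⁻¹' s) ∂ν := by
  unfold Measure.mconv
  rw [Measure.map_apply measurable_mul hs, Measure.prod_apply_symm (measurable_mul hs)]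
  rfl

/-- contraction of tvDist under right convolution with a probability measure. -/
lemma tvDist_mconv_right_le (μ ν κ : Measure G) [IsFiniteMeasure μ] [IsFiniteMeasure ν]
    [IsProbabilityMeasure κ] : tvDist (μ.mconv κ) (ν.mconv κ) ≤ tvDist μ ν := by
  refine iSup₂_le fun s hs => ?_
  have hsec : ∀ y : G, MeasurableSet ((fun x => x * y) ⁻¹' s) := fun y =>
    (measurable_mul_const y) hs
  have hmeas : ∀ (ρ : Measure G) [SFinite ρ] (t : Set G), MeasurableSet t →
      Measurable (fun y => ρ ((fun x => x * y) ⁻¹' t)) := by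
    intro ρ _ t ht
    have : (fun y => ρ ((fun x => x * y) ⁻¹' t))
        = fun y => ρ ((fun x => (x, y)) ⁻¹' ((fun p : G × G => p.1 * p.2) ⁻¹' t)) := rfl
    rw [this]
    exact measurable_measure_prodMk_right (measurable_mul ht)
  have hcompl : ∀ y : G, (fun x => x * y) ⁻¹' sᶜ = ((fun x => x * y) ⁻¹' s)ᶜ := fun y => rfl
  have key : ∀ (ρ₁ ρ₂ : Measure G) [SFinite ρ₁] [SFinite ρ₂] (t : Set G), MeasurableSet t →
      (∫⁻ y, ρ₁ ((fun x => x * y) ⁻¹' t) ∂κ) - (∫⁻ y, ρ₂ ((fun x => x * y) ⁻¹' t) ∂κ)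
        ≤ ∫⁻ y, ρ₁ ((fun x => x * y) ⁻¹' t) - ρ₂ ((fun x => x * y) ⁻¹' t) ∂κ := by
    intro ρ₁ ρ₂ _ _ t ht
    rw [tsub_le_iff_right, ← lintegral_add_left
      (f := fun y => ρ₁ ((fun x => x * y) ⁻¹' t) - ρ₂ ((fun x => x * y) ⁻¹' t))
      ((hmeas ρ₁ t ht).sub (hmeas ρ₂ t ht))]
    exact lintegral_mono fun y => le_tsub_add
  calc ((μ.mconv κ) s : ENNReal) - (ν.mconv κ) s + ((ν.mconv κ) sᶜ - (μ.mconv κ) sᶜ)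
      = ((μ.mconv κ) s - (ν.mconv κ) s) + ((ν.mconv κ) sᶜ - (μ.mconv κ) sᶜ) := rfl
    _ ≤ (∫⁻ y, μ ((fun x => x * y) ⁻¹' s) - ν ((fun x => x * y) ⁻¹' s) ∂κ)
        + ∫⁻ y, ν ((fun x => x * y) ⁻¹' sᶜ) - μ ((fun x => x * y) ⁻¹' sᶜ) ∂κ := by
        rw [mconv_apply μ κ hs, mconv_apply ν κ hs, mconv_apply μ κ hs.compl,
          mconv_apply ν κ hs.compl]
        exact add_le_add (key μ ν s hs) (key ν μ sᶜ hs.compl)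
    _ = ∫⁻ y, (μ ((fun x => x * y) ⁻¹' s) - ν ((fun x => x * y) ⁻¹' s))
        + (ν (((fun x => x * y) ⁻¹' s)ᶜ) - μ (((fun x => x * y) ⁻¹' s)ᶜ)) ∂κ := by
        rw [← lintegral_add_left
          (f := fun y => μ ((fun x => x * y) ⁻¹' s) - ν ((fun x => x * y) ⁻¹' s))
          ((hmeas μ s hs).sub (hmeas ν s hs))]
        simp_rw [hcompl]
    _ ≤ ∫⁻ _, tvDist μ ν ∂κ := lintegral_mono fun y => le_tvDist μ ν (hsec y)
    _ = tvDist μ ν := by simp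
end Grp

/-- Jensen: for a probability measure, `(∫ f)² ≤ ∫ f²` for bounded nonneg measurable f. -/
lemma sq_integral_le {α : Type*} [MeasurableSpace α] (μ : Measure α) [IsProbabilityMeasure μ]
    {f : α → ℝ} (hm : AEStronglyMeasurable f μ) {B : ℝ} (h0 : ∀ x, 0 ≤ f x)
    (hb : ∀ x, f x ≤ B) : (∫ x, f x ∂μ) ^ 2 ≤ ∫ x, (f x) ^ 2 ∂μ := by
  have hf : Integrable f μ := integrable_of_bdd hm fun x => by
    rw [Real.norm_eq_abs, abs_of_nonneg (h0 x)]; exact hb x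
  have hf2 : Integrable (fun x => f x ^ 2) μ := integrable_of_bdd (hm.pow 2) (C := B ^ 2)
    fun x => by
      rw [Real.norm_eq_abs, abs_of_nonneg (sq_nonneg _)]
      exact pow_le_pow_left₀ (h0 x) (hb x) 2
  set a := ∫ x, f x ∂μ with ha
  have key : 0 ≤ ∫ x, (f x - a) ^ 2 ∂μ := integral_nonneg fun x => sq_nonneg _
  have expand : (fun x => (f x - a) ^ 2) = fun x => (f x ^ 2 - (2 * a) * f x) + a ^ 2 := by
    funext x; ring
  have e2 : ∫ x, (f x ^ 2 - 2 * a * f x) + a ^ 2 ∂μ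
      = (∫ x, f x ^ 2 ∂μ) - 2 * a * a + a ^ 2 := by
    have h1 : Integrable (fun x => f x ^ 2 - 2 * a * f x) μ := by
      exact hf2.sub (hf.const_mul (2 * a))
    rw [integral_add h1 (integrable_const _),
      integral_sub hf2 (hf.const_mul (2 * a)), MeasureTheory.integral_const_mul, integral_const]
    simp [measure_univ]
    exact Or.inl rfl
  rw [expand] at key
  rw [e2] at key
  nlinarith [key]

/-- limsup comparison with vanishing error. -/
lemma limsup_le_of_le_add {a c e : ℕ → ℝ} {B : ℝ} (hc : ∀ m, |c m| ≤ B) (ha0 : ∀ m, 0 ≤ a m)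
    (he : Tendsto e atTop (𝓝 0)) (h : ∀ m, a m ≤ c m + e m) :
    limsup a atTop ≤ limsup c atTop := by
  have hbc : IsBoundedUnder (· ≤ ·) atTop c := isBoundedUnder_of ⟨B, fun m => (abs_le.1 (hc m)).2⟩
  have hca : IsCoboundedUnder (· ≤ ·) atTop a :=
    IsBoundedUnder.isCoboundedUnder_le (isBoundedUnder_of ⟨0, fun m => ha0 m⟩)
  refine le_of_forall_pos_le_add fun ε hε => ?_
  have h1 : ∀ᶠ m in atTop, c m < limsup c atTop + ε / 2 :=
    eventually_lt_of_limsup_lt (lt_add_of_pos_right _ (by positivity)) hbc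
  have h2 : ∀ᶠ m in atTop, e m < ε / 2 := he.eventually_lt_const (by positivity)
  refine limsup_le_of_le hca ?_
  filter_upwards [h1, h2] with m hm1 hm2
  calc a m ≤ c m + e m := h m
  _ ≤ (limsup c atTop + ε / 2) + ε / 2 := by linarith
  _ = limsup c atTop + ε := by ring


section Main
variable {G : Type*} [Group G] [MeasurableSpace G] [MeasurableMul₂ G] [MeasurableInv G]
  {H : Type*} [NormedAddCommGroup H] [InnerProductSpace ℝ H] [CompleteSpace H]
  {u : G → H} {C : ℝ}

lemma inner_abs_le (hC0 : 0 ≤ C) (huC : ∀ g, ‖u g‖ ≤ C) (x y : G) :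
    |⟪u x, u y⟫| ≤ C ^ 2 := by
  calc |⟪u x, u y⟫| ≤ ‖u x‖ * ‖u y‖ := abs_real_inner_le_norm _ _
  _ ≤ C * C := mul_le_mul (huC x) (huC y) (norm_nonneg _) hC0
  _ = C ^ 2 := (sq C).symm

lemma e_bound (μ : Measure G) [IsProbabilityMeasure μ] (hu : StronglyMeasurable u)
    (hC0 : 0 ≤ C) (huC : ∀ g, ‖u g‖ ≤ C) (p : G × G) :
    |(∫ g, ⟪u (p.1 * g), u (p.2 * g)⟫ ∂μ) - ∫ g, ⟪u g, u (p.1 * p.2⁻¹ * g)⟫ ∂μ|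
      ≤ C ^ 2 * (tvDist ((Measure.dirac p.2).mconv μ) μ).toReal := by
  have hφ : StronglyMeasurable fun x => ⟪u (p.1 * p.2⁻¹ * x), u x⟫ :=
    (hu.comp_measurable (measurable_const_mul _)).inner hu
  have hW : ∫ g, ⟪u (p.1 * g), u (p.2 * g)⟫ ∂μ
      = ∫ x, ⟪u (p.1 * p.2⁻¹ * x), u x⟫ ∂((Measure.dirac p.2).mconv μ) := by
    rw [dirac_mconv, integral_map (measurable_const_mul p.2).aemeasurable
      hφ.aestronglyMeasurable]
    refine integral_congr_ae (ae_of_all _ fun g => ?_)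
    have h : p.1 * p.2⁻¹ * (p.2 * g) = p.1 * g := by group
    simp only [h]
  have hV : ∫ g, ⟪u g, u (p.1 * p.2⁻¹ * g)⟫ ∂μ = ∫ x, ⟪u (p.1 * p.2⁻¹ * x), u x⟫ ∂μ :=
    integral_congr_ae (ae_of_all _ fun g => real_inner_comm _ _)
  rw [hW, hV, ← Real.norm_eq_abs]
  exact norm_integral_sub_le_tvDist _ _ hφ (sq_nonneg C)
    (fun x => by rw [Real.norm_eq_abs]; exact inner_abs_le hC0 huC _ _)

lemma key_ineq (P μ : Measure G) [IsProbabilityMeasure P] [IsProbabilityMeasure μ]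
    (hu : StronglyMeasurable u) (hC0 : 0 ≤ C) (huC : ∀ g, ‖u g‖ ≤ C) :
    ‖∫ g, u g ∂μ‖ ^ 2 ≤ (∫ g, ∫ h, ⟪u g, u (h * g)⟫ ∂(P.mconv (adjointMeasure P)) ∂μ)
      + (∫ p : G × G, |(∫ g, ⟪u (p.1 * g), u (p.2 * g)⟫ ∂μ)
          - ∫ g, ⟪u g, u (p.1 * p.2⁻¹ * g)⟫ ∂μ| ∂(P.prod P))
      + (2 * C ^ 2 * (tvDist (P.mconv μ) μ).toReal
          + C ^ 2 * (tvDist (P.mconv μ) μ).toReal ^ 2) := by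
  set t := (tvDist (P.mconv μ) μ).toReal with hts
  have ht0 : 0 ≤ t := ENNReal.toReal_nonneg
  set ψ : G → H := fun g => ∫ l, u (l * g) ∂P with hψ
  have hψm : StronglyMeasurable ψ :=
    (hu.comp_measurable (measurable_snd.mul measurable_fst)).integral_prod_right'
  have hψb : ∀ g, ‖ψ g‖ ≤ C := fun g => by
    have := norm_integral_le_of_norm_le_const (μ := P) (f := fun l => u (l * g)) (C := C)
      (ae_of_all _ fun l => huC _)
    simpa using this
  have hconv : ∫ g, u g ∂(P.mconv μ) = ∫ g, ψ g ∂μ := by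
    unfold Measure.mconv
    rw [integral_map measurable_mul.aemeasurable hu.aestronglyMeasurable]
    exact integral_prod_symm _ (integrable_of_bdd
      (hu.comp_measurable measurable_mul).aestronglyMeasurable (fun q => huC _))
  have h1 : ‖∫ g, u g ∂μ‖ ≤ ‖∫ g, ψ g ∂μ‖ + C * t := by
    have hd := norm_integral_sub_le_tvDist (P.mconv μ) μ hu hC0 huC
    calc ‖∫ g, u g ∂μ‖
        = ‖(∫ g, u g ∂(P.mconv μ)) - ((∫ g, u g ∂(P.mconv μ)) - ∫ g, u g ∂μ)‖ := by
          rw [sub_sub_cancel]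
    _ ≤ ‖∫ g, u g ∂(P.mconv μ)‖ + ‖(∫ g, u g ∂(P.mconv μ)) - ∫ g, u g ∂μ‖ := norm_sub_le _ _
    _ ≤ ‖∫ g, ψ g ∂μ‖ + C * t := by rw [← hconv]; exact add_le_add le_rfl hd
  have h2 : ‖∫ g, ψ g ∂μ‖ ^ 2 ≤ ∫ g, ‖ψ g‖ ^ 2 ∂μ := by
    calc ‖∫ g, ψ g ∂μ‖ ^ 2 ≤ (∫ g, ‖ψ g‖ ∂μ) ^ 2 :=
          pow_le_pow_left₀ (norm_nonneg _) (norm_integral_le_integral_norm _) 2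
    _ ≤ ∫ g, ‖ψ g‖ ^ 2 ∂μ :=
          sq_integral_le μ hψm.norm.aestronglyMeasurable (fun g => norm_nonneg _) hψb
  set Q := P.prod P with hQ
  have h4 : ∀ g, ‖ψ g‖ ^ 2 = ∫ p : G × G, ⟪u (p.1 * g), u (p.2 * g)⟫ ∂Q := by
    intro g
    have hintl : Integrable (fun l => u (l * g)) P :=
      integrable_of_bdd (hu.comp_measurable (measurable_id.mul_const g)).aestronglyMeasurable
        (fun l => huC _)
    have hQint : Integrable (fun p : G × G => ⟪u (p.1 * g), u (p.2 * g)⟫) Q :=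
      integrable_of_bdd ((hu.comp_measurable (measurable_fst.mul_const g)).inner
        (hu.comp_measurable (measurable_snd.mul_const g))).aestronglyMeasurable
        (C := C ^ 2) (fun p => by rw [Real.norm_eq_abs]; exact inner_abs_le hC0 huC _ _)
    rw [← real_inner_self_eq_norm_sq]
    calc ⟪ψ g, ψ g⟫ = ∫ l, ⟪ψ g, u (l * g)⟫ ∂P := (integral_inner hintl (ψ g)).symm
    _ = ∫ l, ∫ k, ⟪u (l * g), u (k * g)⟫ ∂P ∂P := by
        refine integral_congr_ae (ae_of_all _ fun l => ?_)
        show ⟪ψ g, u (l * g)⟫ = ∫ k, ⟪u (l * g), u (k * g)⟫ ∂P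
        rw [real_inner_comm]
        exact (integral_inner hintl (u (l * g))).symm
    _ = ∫ p : G × G, ⟪u (p.1 * g), u (p.2 * g)⟫ ∂Q := (integral_prod _ hQint).symm
  have h5 : ∫ g, (∫ p : G × G, ⟪u (p.1 * g), u (p.2 * g)⟫ ∂Q) ∂μ
      = ∫ p : G × G, (∫ g, ⟪u (p.1 * g), u (p.2 * g)⟫ ∂μ) ∂Q := by
    apply integral_integral_swap
    exact integrable_of_bdd ((hu.comp_measurable (measurable_snd.fst.mul measurable_fst)).inner
      (hu.comp_measurable (measurable_snd.snd.mul measurable_fst))).aestronglyMeasurable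
      (C := C ^ 2) (fun z => by rw [Real.norm_eq_abs]; exact inner_abs_le hC0 huC _ _)
  have hPA : P.mconv (adjointMeasure P) = Measure.map (fun q : G × G => q.1 * q.2⁻¹) Q := by
    unfold adjointMeasure Measure.mconv
    have : P.prod (Measure.map (fun g : G => g⁻¹) P)
        = Measure.map (Prod.map id (fun g : G => g⁻¹)) Q := by
      rw [← Measure.map_prod_map _ _ measurable_id measurable_inv, Measure.map_id]
    rw [this, Measure.map_map measurable_mul (measurable_id.prodMap measurable_inv)]
    rfl
  have h6 : ∀ g, ∫ h, ⟪u g, u (h * g)⟫ ∂(P.mconv (adjointMeasure P))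
      = ∫ p : G × G, ⟪u g, u (p.1 * p.2⁻¹ * g)⟫ ∂Q := by
    intro g
    rw [hPA, integral_map (φ := fun q : G × G => q.1 * q.2⁻¹) (measurable_fst.mul measurable_snd.inv).aemeasurable
      (stronglyMeasurable_const.inner
        (hu.comp_measurable (measurable_id.mul_const g))).aestronglyMeasurable]
  have h7 : ∫ g, ∫ h, ⟪u g, u (h * g)⟫ ∂(P.mconv (adjointMeasure P)) ∂μ
      = ∫ p : G × G, (∫ g, ⟪u g, u (p.1 * p.2⁻¹ * g)⟫ ∂μ) ∂Q := by
    calc ∫ g, ∫ h, ⟪u g, u (h * g)⟫ ∂(P.mconv (adjointMeasure P)) ∂μ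
        = ∫ g, (∫ p : G × G, ⟪u g, u (p.1 * p.2⁻¹ * g)⟫ ∂Q) ∂μ :=
          integral_congr_ae (ae_of_all _ fun g => h6 g)
    _ = ∫ p : G × G, (∫ g, ⟪u g, u (p.1 * p.2⁻¹ * g)⟫ ∂μ) ∂Q := by
        apply integral_integral_swap
        have hsm7 : StronglyMeasurable fun z : G × (G × G) => ⟪u z.1, u (z.2.1 * z.2.2⁻¹ * z.1)⟫ :=
          (hu.comp_measurable measurable_fst).inner (hu.comp_measurable
            ((measurable_snd.fst.mul measurable_snd.snd.inv).mul measurable_fst))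
        exact integrable_of_bdd hsm7.aestronglyMeasurable
          (C := C ^ 2) (fun z => by rw [Real.norm_eq_abs]; exact inner_abs_le hC0 huC _ _)
  -- integrability of W and V over Q
  have hWm : StronglyMeasurable fun p : G × G => ∫ g, ⟪u (p.1 * g), u (p.2 * g)⟫ ∂μ :=
    (((hu.comp_measurable (measurable_fst.fst.mul measurable_snd)).inner
      (hu.comp_measurable (measurable_fst.snd.mul measurable_snd))) :
      StronglyMeasurable fun q : (G × G) × G => ⟪u (q.1.1 * q.2), u (q.1.2 * q.2)⟫).integral_prod_right'
  have hVm : StronglyMeasurable fun p : G × G => ∫ g, ⟪u g, u (p.1 * p.2⁻¹ * g)⟫ ∂μ := by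
    have hsmV : StronglyMeasurable fun q : (G × G) × G => ⟪u q.2, u (q.1.1 * q.1.2⁻¹ * q.2)⟫ :=
      (hu.comp_measurable measurable_snd).inner (hu.comp_measurable
        ((measurable_fst.fst.mul measurable_fst.snd.inv).mul measurable_snd))
    exact hsmV.integral_prod_right'
  have hintbd : ∀ (f : G → ℝ), AEStronglyMeasurable f μ → (∀ x, |f x| ≤ C ^ 2) →
      |∫ g, f g ∂μ| ≤ C ^ 2 := by
    intro f hfm hfb
    rw [← Real.norm_eq_abs]
    have := norm_integral_le_of_norm_le_const (μ := μ) (f := f) (C := C ^ 2)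
      (ae_of_all _ fun x => by rw [Real.norm_eq_abs]; exact hfb x)
    simpa using this
  have hWb : ∀ p : G × G, |∫ g, ⟪u (p.1 * g), u (p.2 * g)⟫ ∂μ| ≤ C ^ 2 := fun p =>
    hintbd _ ((hu.comp_measurable (measurable_const_mul _)).inner
      (hu.comp_measurable (measurable_const_mul _))).aestronglyMeasurable
      (fun x => inner_abs_le hC0 huC _ _)
  have hVb : ∀ p : G × G, |∫ g, ⟪u g, u (p.1 * p.2⁻¹ * g)⟫ ∂μ| ≤ C ^ 2 := fun p =>
    hintbd _ (hu.inner (hu.comp_measurable (measurable_const_mul _))).aestronglyMeasurable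
      (fun x => inner_abs_le hC0 huC _ _)
  have hWint : Integrable (fun p : G × G => ∫ g, ⟪u (p.1 * g), u (p.2 * g)⟫ ∂μ) Q :=
    integrable_of_bdd hWm.aestronglyMeasurable (C := C ^ 2)
      (fun p => by rw [Real.norm_eq_abs]; exact hWb p)
  have hVint : Integrable (fun p : G × G => ∫ g, ⟪u g, u (p.1 * p.2⁻¹ * g)⟫ ∂μ) Q :=
    integrable_of_bdd hVm.aestronglyMeasurable (C := C ^ 2)
      (fun p => by rw [Real.norm_eq_abs]; exact hVb p)
  have h8 : ∫ p : G × G, (∫ g, ⟪u (p.1 * g), u (p.2 * g)⟫ ∂μ) ∂Q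
      ≤ (∫ p : G × G, (∫ g, ⟪u g, u (p.1 * p.2⁻¹ * g)⟫ ∂μ) ∂Q)
        + ∫ p : G × G, |(∫ g, ⟪u (p.1 * g), u (p.2 * g)⟫ ∂μ)
            - ∫ g, ⟪u g, u (p.1 * p.2⁻¹ * g)⟫ ∂μ| ∂Q := by
    have habs : Integrable (fun p : G × G => |(∫ g, ⟪u (p.1 * g), u (p.2 * g)⟫ ∂μ)
        - ∫ g, ⟪u g, u (p.1 * p.2⁻¹ * g)⟫ ∂μ|) Q := (hWint.sub hVint).abs
    rw [← integral_add hVint habs]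
    refine integral_mono hWint (hVint.add habs) fun p => ?_
    have := le_abs_self ((∫ g, ⟪u (p.1 * g), u (p.2 * g)⟫ ∂μ)
        - ∫ g, ⟪u g, u (p.1 * p.2⁻¹ * g)⟫ ∂μ)
    simp only [Pi.add_apply]
    linarith
  have hXle : ‖∫ g, ψ g ∂μ‖ ≤ C := by
    rw [← hconv]
    have := norm_integral_le_of_norm_le_const (μ := P.mconv μ) (f := u) (C := C)
      (ae_of_all _ huC)
    simpa using this
  have hX0 : (0:ℝ) ≤ ‖∫ g, ψ g ∂μ‖ := norm_nonneg _
  have hx2 : ‖∫ g, ψ g ∂μ‖ ^ 2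
      ≤ (∫ g, ∫ h, ⟪u g, u (h * g)⟫ ∂(P.mconv (adjointMeasure P)) ∂μ)
        + ∫ p : G × G, |(∫ g, ⟪u (p.1 * g), u (p.2 * g)⟫ ∂μ)
            - ∫ g, ⟪u g, u (p.1 * p.2⁻¹ * g)⟫ ∂μ| ∂Q := by
    calc ‖∫ g, ψ g ∂μ‖ ^ 2 ≤ ∫ g, ‖ψ g‖ ^ 2 ∂μ := h2
    _ = ∫ g, (∫ p : G × G, ⟪u (p.1 * g), u (p.2 * g)⟫ ∂Q) ∂μ :=
        integral_congr_ae (ae_of_all _ fun g => h4 g)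
    _ = ∫ p : G × G, (∫ g, ⟪u (p.1 * g), u (p.2 * g)⟫ ∂μ) ∂Q := h5
    _ ≤ _ := by rw [h7]; exact h8
  calc ‖∫ g, u g ∂μ‖ ^ 2 ≤ (‖∫ g, ψ g ∂μ‖ + C * t) ^ 2 :=
        pow_le_pow_left₀ (norm_nonneg _) h1 2
  _ = ‖∫ g, ψ g ∂μ‖ ^ 2 + 2 * ‖∫ g, ψ g ∂μ‖ * (C * t) + (C * t) ^ 2 := by ring
  _ ≤ _ := by nlinarith [hx2, hXle, hX0, ht0, hC0, mul_le_mul_of_nonneg_right hXle (mul_nonneg hC0 ht0)]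

end Main

/-- Van der Corput corollary: there is a two-sided Reiter sequence `F'`
(namely `F'_n = F_n ∗ F_n^*`) such that
`limsup_m ‖∫ u_g dF_m(g)‖² ≤ inf_n limsup_m ∫∫ ⟨u_g, u_{hg}⟩ dF'_n(h) dF_m(g)`. -/
theorem van_der_corput_two_sided {G : Type*} [Group G] [TopologicalSpace G] [IsTopologicalGroup G]
    [LocallyCompactSpace G] [SecondCountableTopology G] [MeasurableSpace G] [BorelSpace G]
    {H : Type*} [NormedAddCommGroup H] [InnerProductSpace ℝ H] [CompleteSpace H]
    (F : ℕ → Measure G) (hF : IsLeftReiter F)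
    (u : G → H) (hu : StronglyMeasurable u) (C : ℝ) (huC : ∀ g, ‖u g‖ ≤ C) :
    ∃ F' : ℕ → Measure G, (∀ n, F' n = (F n).mconv (adjointMeasure (F n))) ∧
      IsLeftReiter F' ∧ IsRightReiter F' ∧
      ∀ n, limsup (fun m => ‖∫ g, u g ∂(F m)‖ ^ 2) atTop ≤
        limsup (fun m => ∫ g, ∫ h, ⟪u g, u (h * g)⟫ ∂(F' n) ∂(F m)) atTop := by
  have hprob := hF.1
  have hC0 : 0 ≤ C := le_trans (norm_nonneg _) (huC 1)
  set F' : ℕ → Measure G := fun n => (F n).mconv (adjointMeasure (F n)) with hF'def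
  have hF'prob : ∀ N, IsProbabilityMeasure (F' N) := fun N => by
    haveI := hprob N; infer_instance
  have hF'self : ∀ N, adjointMeasure (F' N) = F' N := fun N => by
    haveI := hprob N
    rw [hF'def, adjoint_mconv, adjoint_adjoint]
  -- left Reiter
  have hL : IsLeftReiter F' := by
    refine ⟨hF'prob, fun h hh => ?_⟩
    haveI := hh
    have hle : ∀ N, tvDist (h.mconv (F' N)) (F' N) ≤ tvDist (h.mconv (F N)) (F N) := by
      intro N
      haveI := hprob N
      have hassoc : h.mconv (F' N) = (h.mconv (F N)).mconv (adjointMeasure (F N)) :=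
        (mconv_assoc _ _ _).symm
      rw [hassoc]
      exact tvDist_mconv_right_le _ _ _
    exact tendsto_of_tendsto_of_tendsto_of_le_of_le tendsto_const_nhds (hF.2 h hh)
      (fun N => zero_le) hle
  -- right Reiter
  have hR : IsRightReiter F' := by
    refine ⟨hF'prob, fun h hh => ?_⟩
    haveI := hh
    have hkey : ∀ N, tvDist ((F' N).mconv h) (F' N)
        ≤ tvDist ((adjointMeasure h).mconv (F' N)) (F' N) := by
      intro N
      haveI := hprob N
      haveI := hF'prob N
      have h1 : (F' N).mconv h
          = Measure.map (fun g : G => g⁻¹) ((adjointMeasure h).mconv (F' N)) := by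
        have h2 := adjoint_mconv (adjointMeasure h) (F' N)
        rw [hF'self N, adjoint_adjoint] at h2
        rw [← h2]
        rfl
      have h3 : F' N = Measure.map (fun g : G => g⁻¹) (F' N) := by
        conv_lhs => rw [← hF'self N]
        rfl
      calc tvDist ((F' N).mconv h) (F' N)
          = tvDist (Measure.map (fun g : G => g⁻¹) ((adjointMeasure h).mconv (F' N)))
            (Measure.map (fun g : G => g⁻¹) (F' N)) := by rw [← h1, ← h3]
      _ ≤ tvDist ((adjointMeasure h).mconv (F' N)) (F' N) :=
          tvDist_map_le _ _ measurable_inv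
    haveI : IsProbabilityMeasure (adjointMeasure h) := inferInstance
    exact tendsto_of_tendsto_of_tendsto_of_le_of_le tendsto_const_nhds
      (hL.2 (adjointMeasure h) inferInstance) (fun N => zero_le) hkey
  refine ⟨F', fun n => rfl, hL, hR, fun n => ?_⟩
  -- the limsup inequality
  haveI := hprob n
  set c : ℕ → ℝ := fun m => ∫ g, ∫ h, ⟪u g, u (h * g)⟫ ∂(F' n) ∂(F m) with hc_def
  set τ : ℕ → ℝ := fun m => (tvDist ((F n).mconv (F m)) (F m)).toReal with hτdef
  set err1 : ℕ → ℝ := fun m => 2 * C ^ 2 * τ m + C ^ 2 * τ m ^ 2 with herr1def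
  set err2 : ℕ → ℝ := fun m => ∫ p : G × G, |(∫ g, ⟪u (p.1 * g), u (p.2 * g)⟫ ∂(F m))
      - ∫ g, ⟪u g, u (p.1 * p.2⁻¹ * g)⟫ ∂(F m)| ∂((F n).prod (F n)) with herr2def
  have hcm : ∀ m, |c m| ≤ C ^ 2 := by
    intro m
    haveI := hprob m
    haveI := hF'prob n
    have hfb : ∀ g : G, |∫ h, ⟪u g, u (h * g)⟫ ∂(F' n)| ≤ C ^ 2 := fun g => by
      rw [← Real.norm_eq_abs]
      have := norm_integral_le_of_norm_le_const (μ := F' n)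
        (f := fun h => ⟪u g, u (h * g)⟫) (C := C ^ 2)
        (ae_of_all _ fun h => by rw [Real.norm_eq_abs]; exact inner_abs_le hC0 huC _ _)
      simpa using this
    rw [hc_def, ← Real.norm_eq_abs]
    have := norm_integral_le_of_norm_le_const (μ := F m)
      (f := fun g => ∫ h, ⟪u g, u (h * g)⟫ ∂(F' n)) (C := C ^ 2)
      (ae_of_all _ fun g => by rw [Real.norm_eq_abs]; exact hfb g)
    simpa using this
  have htv : Tendsto τ atTop (𝓝 0) := by
    have h0 := (ENNReal.tendsto_toReal (a := 0) (by simp)).comp (hF.2 (F n) inferInstance)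
    exact h0
  have herr1 : Tendsto err1 atTop (𝓝 0) := by
    have : Tendsto (fun m => 2 * C ^ 2 * τ m + C ^ 2 * τ m ^ 2) atTop
        (𝓝 (2 * C ^ 2 * 0 + C ^ 2 * 0 ^ 2)) :=
      (tendsto_const_nhds.mul htv).add (tendsto_const_nhds.mul (htv.pow 2))
    simpa using this
  have herr2 : Tendsto err2 atTop (𝓝 0) := by
    have hDC := tendsto_integral_of_dominated_convergence (μ := (F n).prod (F n))
      (F := fun m (p : G × G) => |(∫ g, ⟪u (p.1 * g), u (p.2 * g)⟫ ∂(F m))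
        - ∫ g, ⟪u g, u (p.1 * p.2⁻¹ * g)⟫ ∂(F m)|)
      (f := fun _ => (0 : ℝ)) (bound := fun _ => 2 * C ^ 2)
      (fun m => by
        haveI := hprob m
        have hWm : StronglyMeasurable fun p : G × G =>
            ∫ g, ⟪u (p.1 * g), u (p.2 * g)⟫ ∂(F m) :=
          (((hu.comp_measurable (measurable_fst.fst.mul measurable_snd)).inner
            (hu.comp_measurable (measurable_fst.snd.mul measurable_snd))) :
            StronglyMeasurable fun q : (G × G) × G => ⟪u (q.1.1 * q.2), u (q.1.2 * q.2)⟫).integral_prod_right'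
        have hVm : StronglyMeasurable fun p : G × G =>
            ∫ g, ⟪u g, u (p.1 * p.2⁻¹ * g)⟫ ∂(F m) := by
          have hsmV : StronglyMeasurable fun q : (G × G) × G =>
              ⟪u q.2, u (q.1.1 * q.1.2⁻¹ * q.2)⟫ :=
            (hu.comp_measurable measurable_snd).inner (hu.comp_measurable
              ((measurable_fst.fst.mul measurable_fst.snd.inv).mul measurable_snd))
          exact hsmV.integral_prod_right'
        exact (continuous_abs.comp_stronglyMeasurable (hWm.sub hVm)).aestronglyMeasurable)
      (integrable_const _)
      (fun m => by
        haveI := hprob m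
        refine ae_of_all _ fun p => ?_
        have hWb : |∫ g, ⟪u (p.1 * g), u (p.2 * g)⟫ ∂(F m)| ≤ C ^ 2 := by
          rw [← Real.norm_eq_abs]
          have := norm_integral_le_of_norm_le_const (μ := F m)
            (f := fun g => ⟪u (p.1 * g), u (p.2 * g)⟫) (C := C ^ 2)
            (ae_of_all _ fun g => by rw [Real.norm_eq_abs]; exact inner_abs_le hC0 huC _ _)
          simpa using this
        have hVb : |∫ g, ⟪u g, u (p.1 * p.2⁻¹ * g)⟫ ∂(F m)| ≤ C ^ 2 := by
          rw [← Real.norm_eq_abs]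
          have := norm_integral_le_of_norm_le_const (μ := F m)
            (f := fun g => ⟪u g, u (p.1 * p.2⁻¹ * g)⟫) (C := C ^ 2)
            (ae_of_all _ fun g => by rw [Real.norm_eq_abs]; exact inner_abs_le hC0 huC _ _)
          simpa using this
        rw [Real.norm_eq_abs, abs_abs]
        calc |(∫ g, ⟪u (p.1 * g), u (p.2 * g)⟫ ∂(F m))
            - ∫ g, ⟪u g, u (p.1 * p.2⁻¹ * g)⟫ ∂(F m)|
            ≤ |∫ g, ⟪u (p.1 * g), u (p.2 * g)⟫ ∂(F m)|
              + |∫ g, ⟪u g, u (p.1 * p.2⁻¹ * g)⟫ ∂(F m)| := abs_sub _ _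
        _ ≤ C ^ 2 + C ^ 2 := add_le_add hWb hVb
        _ = 2 * C ^ 2 := by ring)
      (by
        refine ae_of_all _ fun p => ?_
        haveI : IsProbabilityMeasure (Measure.dirac p.2) := inferInstance
        have hdir : Tendsto (fun m =>
            C ^ 2 * (tvDist ((Measure.dirac p.2).mconv (F m)) (F m)).toReal) atTop (𝓝 0) := by
          have h0 := (ENNReal.tendsto_toReal (a := 0) (by simp)).comp
            (hF.2 (Measure.dirac p.2) inferInstance)
          have h1 : Tendsto (fun m =>
              (tvDist ((Measure.dirac p.2).mconv (F m)) (F m)).toReal) atTop (𝓝 0) := by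
            exact h0
          simpa using tendsto_const_nhds.mul h1
        refine squeeze_zero (fun m => abs_nonneg _) (fun m => ?_) hdir
        haveI := hprob m
        exact e_bound (F m) hu hC0 huC p)
    simpa using hDC
  have hkey : ∀ m, ‖∫ g, u g ∂(F m)‖ ^ 2 ≤ c m + (err2 m + err1 m) := by
    intro m
    haveI := hprob m
    have := key_ineq (F n) (F m) hu hC0 huC
    rw [hc_def]
    simp only [herr1def, herr2def, hτdef]
    linarith [this]
  exact limsup_le_of_le_add hcm (fun m => pow_nonneg (norm_nonneg _) 2)
    (by simpa using herr2.add herr1) hkey
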